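/- Let G = (V,E) be a finite graph with covered components polynomial C(G) = C(G,x,y,z). Then the number of vertices n(G) equals the degree of C(G) in the variable x, the number of edges m(G) equals the degree of C(G) in the variable y, and the number of connected components k(G) equals the degree in x of the coefficient of y^{m(G)} in C(G). -/
import Mathlib


open MvPolynomial Finset
open scoped Classical

noncomputable section

variable {V : Type}

/-- The (finite) edge set of a simple graph on a finite vertex type, as a `Finset`. -/
def edgeFinset' [Fintype V] (G : SimpleGraph V) : Finset (Sym2 V) :=
  (Set.toFinite G.edgeSet).toFinset

/-- `k(G)`: the number of connected components of `G`. -/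
def kG (G : SimpleGraph V) : ℕ := Nat.card G.ConnectedComponent

/-- `c(G)`: the number of covered components of `G`, i.e. connected components
containing at least one edge. -/
def cG (G : SimpleGraph V) : ℕ :=
  Nat.card {c : G.ConnectedComponent // ∃ v w, G.Adj v w ∧ G.connectedComponentMk v = c}

/-- The covered components polynomial
`C(G,x,y,z) = ∑_{A ⊆ E} x^{k(⟨A⟩)} y^{|A|} z^{c(⟨A⟩)}` of a finite simple graph, where
`⟨A⟩` denotes the spanning subgraph with edge set `A`, and `x = X 0`, `y = X 1`,
`z = X 2`. -/
def ccp [Fintype V] (G : SimpleGraph V) : MvPolynomial (Fin 3) ℤ :=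
  ∑ A ∈ (edgeFinset' G).powerset,
    X 0 ^ kG (SimpleGraph.fromEdgeSet (A : Set (Sym2 V))) * X 1 ^ A.card *
      X 2 ^ cG (SimpleGraph.fromEdgeSet (A : Set (Sym2 V)))

/-- `[x^i y^j z^k] P`: the coefficient of the monomial `x^i y^j z^k`. -/
def coeff3 (P : MvPolynomial (Fin 3) ℤ) (i j k : ℕ) : ℤ :=
  MvPolynomial.coeff (Finsupp.single 0 i + Finsupp.single 1 j + Finsupp.single 2 k) P

/-- `deg_x [y^m] P`: the degree in `x` of the coefficient of `y^m` in `P`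
(a polynomial in `x` and `z`). -/
def degXcoeffY (P : MvPolynomial (Fin 3) ℤ) (m : ℕ) : ℕ :=
  (P.support.filter (fun μ => μ 1 = m)).sup (fun μ => μ 0)


def sig [Fintype V] (A : Finset (Sym2 V)) : Fin 3 →₀ ℕ :=
  Finsupp.single 0 (kG (SimpleGraph.fromEdgeSet (A : Set (Sym2 V)))) +
  Finsupp.single 1 A.card +
  Finsupp.single 2 (cG (SimpleGraph.fromEdgeSet (A : Set (Sym2 V))))

lemma sig_apply0 [Fintype V] (A : Finset (Sym2 V)) :
    sig A 0 = kG (SimpleGraph.fromEdgeSet (A : Set (Sym2 V))) := by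
  simp [sig, Finsupp.single_apply]

lemma sig_apply1 [Fintype V] (A : Finset (Sym2 V)) : sig A 1 = A.card := by
  simp [sig, Finsupp.single_apply]

lemma ccp_eq [Fintype V] (G : SimpleGraph V) :
    ccp G = ∑ A ∈ (edgeFinset' G).powerset, monomial (sig A) 1 := by
  refine Finset.sum_congr rfl fun A _ => ?_
  rw [sig, X_pow_eq_monomial, X_pow_eq_monomial, X_pow_eq_monomial,
    monomial_mul, monomial_mul]
  norm_num

lemma coeff_ccp [Fintype V] (G : SimpleGraph V) (μ : Fin 3 →₀ ℕ) :
    MvPolynomial.coeff μ (ccp G) =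
      ((edgeFinset' G).powerset.filter (fun A => sig A = μ)).card := by
  rw [ccp_eq, coeff_sum, Finset.card_filter]
  push_cast
  simp [coeff_monomial]

lemma mem_support_ccp [Fintype V] (G : SimpleGraph V) (μ : Fin 3 →₀ ℕ) :
    μ ∈ (ccp G).support ↔ ∃ A ∈ (edgeFinset' G).powerset, sig A = μ := by
  rw [mem_support_iff, coeff_ccp]
  simp [Finset.filter_eq_empty_iff, ← Finset.card_ne_zero (s := _)]

lemma kG_le [Fintype V] (H : SimpleGraph V) : kG H ≤ Fintype.card V := by
  have := Nat.card_le_card_of_surjective H.connectedComponentMk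
    (fun c => c.exists_rep.imp fun v h => h)
  simpa [kG, Nat.card_eq_fintype_card] using this

lemma kG_bot [Fintype V] : kG (⊥ : SimpleGraph V) = Fintype.card V := by
  rw [kG, ← Nat.card_eq_fintype_card]
  refine (Nat.card_eq_of_bijective (SimpleGraph.connectedComponentMk _)
    ⟨?_, fun c => c.exists_rep.imp fun v h => h⟩).symm
  intro a b h
  exact (SimpleGraph.reachable_bot).mp ((SimpleGraph.ConnectedComponent.eq).mp h)

lemma fromEdgeSet_edgeFinset' [Fintype V] (G : SimpleGraph V) :
    SimpleGraph.fromEdgeSet ((edgeFinset' G : Finset (Sym2 V)) : Set (Sym2 V)) = G := by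
  rw [edgeFinset', Set.Finite.coe_toFinset, SimpleGraph.fromEdgeSet_edgeSet]

/-- For a finite graph `G`, the number of vertices `n(G)` is the degree
of `C(G)` in `x`, the number of edges `m(G)` is the degree of `C(G)` in `y`, and the
number of connected components `k(G)` is the degree in `x` of the coefficient of
`y^{m(G)}` in `C(G)`. -/
theorem ccp_vertices_edges_components {V : Type} [Fintype V] (G : SimpleGraph V) :
    Fintype.card V = MvPolynomial.degreeOf 0 (ccp G) ∧
    (edgeFinset' G).card = MvPolynomial.degreeOf 1 (ccp G) ∧
    kG G = degXcoeffY (ccp G) (edgeFinset' G).card := by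
  constructor
  · rw [degreeOf_eq_sup]
    apply le_antisymm
    · have h0 : sig (∅ : Finset (Sym2 V)) ∈ (ccp G).support :=
        (mem_support_ccp G _).mpr ⟨∅, by simp, rfl⟩
      calc Fintype.card V = sig (∅ : Finset (Sym2 V)) 0 := by
            rw [sig_apply0]; simp [kG_bot]
        _ ≤ _ := Finset.le_sup (f := fun μ => μ 0) h0
    · apply Finset.sup_le
      intro μ hμ
      obtain ⟨A, _, rfl⟩ := (mem_support_ccp G μ).mp hμ
      rw [sig_apply0]
      exact kG_le _
  constructor
  · rw [degreeOf_eq_sup]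
    apply le_antisymm
    · have h0 : sig (edgeFinset' G) ∈ (ccp G).support :=
        (mem_support_ccp G _).mpr ⟨edgeFinset' G, Finset.mem_powerset_self _, rfl⟩
      calc (edgeFinset' G).card = sig (edgeFinset' G) 1 := (sig_apply1 _).symm
        _ ≤ _ := Finset.le_sup (f := fun μ => μ 1) h0
    · apply Finset.sup_le
      intro μ hμ
      obtain ⟨A, hA, rfl⟩ := (mem_support_ccp G μ).mp hμ
      rw [sig_apply1]
      exact Finset.card_le_card (Finset.mem_powerset.mp hA)
  · rw [degXcoeffY]
    have hfil : (ccp G).support.filter (fun μ => μ 1 = (edgeFinset' G).card) =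
        {sig (edgeFinset' G)} := by
      ext μ
      simp only [Finset.mem_filter, Finset.mem_singleton]
      constructor
      · rintro ⟨hμ, h1⟩
        obtain ⟨A, hA, rfl⟩ := (mem_support_ccp G μ).mp hμ
        rw [sig_apply1] at h1
        have : A = edgeFinset' G :=
          Finset.eq_of_subset_of_card_le (Finset.mem_powerset.mp hA) (le_of_eq h1.symm)
        rw [this]
      · rintro rfl
        exact ⟨(mem_support_ccp G _).mpr ⟨edgeFinset' G, Finset.mem_powerset_self _, rfl⟩,
          sig_apply1 _⟩
    rw [hfil, Finset.sup_singleton, sig_apply0, fromEdgeSet_edgeFinset']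

end
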